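/- If c : S → 𝕋_k is a pattern-free permutation code with a_l codewords in 𝕊_l, then ℙ_c = ∑_{l=1}^k a_l / l! ≤ 1. -/

import Mathlib

open Finset Equiv Function

variable {n l k : ℕ}

lemma perm_eq_of_lt_iff (α β : Equiv.Perm (Fin n))
    (h : ∀ i j, α i < α j ↔ β i < β j) : α = β := by
  have hsm : StrictMono (α ∘ β.symm) := by
    intro i j hij
    simp only [Function.comp]
    rw [h]
    simpa using hij
  have inst : WellFoundedLT (Fin n) := inferInstance
  have hid : (α ∘ β.symm : Fin n → Fin n) = id := by
    apply (StrictMono.range_inj hsm strictMono_id).1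
    rw [Set.range_comp, Set.range_id, Set.range_eq_univ.2 β.symm.surjective]
    exact Set.image_univ_of_surjective α.surjective
  ext i
  have := congrFun hid (β i)
  simp only [Function.comp, Equiv.symm_apply_apply, id] at this
  exact congrArg Fin.val this

lemma pattg_inj (h : l ≤ k) (τ : Equiv.Perm (Fin k)) :
    Function.Injective (fun i : Fin l => τ (Fin.castLE h i)) := fun i j hij =>
  Fin.castLE_injective h (τ.injective hij)

lemma pattFinset_card (h : l ≤ k) (τ : Equiv.Perm (Fin k)) :
    (Finset.image (fun i : Fin l => τ (Fin.castLE h i)) Finset.univ).card = l := by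
  rw [Finset.card_image_of_injective _ (pattg_inj h τ), Finset.card_univ, Fintype.card_fin]

/-- pattern of τ on the first `l` positions -/
noncomputable def patt (h : l ≤ k) (τ : Equiv.Perm (Fin k)) : Equiv.Perm (Fin l) :=
  Equiv.ofBijective
    (fun i => ((Finset.image (fun i : Fin l => τ (Fin.castLE h i)) Finset.univ).orderIsoOfFin
        (pattFinset_card h τ)).symm
      ⟨τ (Fin.castLE h i), Finset.mem_image_of_mem _ (Finset.mem_univ i)⟩)
    (Finite.injective_iff_bijective.1 (fun i j hij => by
      have := congrArg (fun x =>
        (((Finset.image (fun i : Fin l => τ (Fin.castLE h i)) Finset.univ).orderIsoOfFin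
          (pattFinset_card h τ)) x : Fin k)) hij
      simp only [OrderIso.apply_symm_apply] at this
      exact pattg_inj h τ this))

lemma patt_lt_iff (h : l ≤ k) (τ : Equiv.Perm (Fin k)) (i j : Fin l) :
    patt h τ i < patt h τ j ↔ τ (Fin.castLE h i) < τ (Fin.castLE h j) := by
  simp only [patt, Equiv.ofBijective_apply]
  rw [← ((Finset.image (fun i : Fin l => τ (Fin.castLE h i)) Finset.univ).orderIsoOfFin
      (pattFinset_card h τ)).lt_iff_lt]
  simp only [OrderIso.apply_symm_apply]
  exact Iff.rfl

lemma patt_eq_iff (h : l ≤ k) (τ : Equiv.Perm (Fin k)) (σ : Equiv.Perm (Fin l)) :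
    patt h τ = σ ↔ ∀ i j, σ i < σ j ↔ τ (Fin.castLE h i) < τ (Fin.castLE h j) := by
  constructor
  · rintro rfl i j; exact patt_lt_iff h τ i j
  · intro hσ
    exact perm_eq_of_lt_iff _ _ (fun i j => (patt_lt_iff h τ i j).trans (hσ i j).symm)

noncomputable def extPerm (h : l ≤ k) (σ : Equiv.Perm (Fin l)) : Equiv.Perm (Fin k) :=
  σ.viaEmbedding (Fin.castLEEmb h)

lemma extPerm_castLE (h : l ≤ k) (σ : Equiv.Perm (Fin l)) (i : Fin l) :
    extPerm h σ (Fin.castLE h i) = Fin.castLE h (σ i) :=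
  σ.viaEmbedding_apply (Fin.castLEEmb h) i

lemma patt_mul (h : l ≤ k) (τ : Equiv.Perm (Fin k)) (σ' : Equiv.Perm (Fin l)) :
    patt h (τ * extPerm h σ') = patt h τ * σ' := by
  rw [patt_eq_iff]
  intro i j
  simp only [Equiv.Perm.mul_apply, extPerm_castLE]
  rw [patt_lt_iff]

noncomputable def fib (h : l ≤ k) (σ : Equiv.Perm (Fin l)) : Finset (Equiv.Perm (Fin k)) :=
  Finset.univ.filter (fun τ => patt h τ = σ)

lemma fib_card_const (h : l ≤ k) (σ σ'' : Equiv.Perm (Fin l)) :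
    (fib h σ).card = (fib h σ'').card := by
  classical
  apply Finset.card_bij (fun τ _ => τ * extPerm h (σ⁻¹ * σ''))
  · intro τ hτ
    simp only [fib, Finset.mem_filter, Finset.mem_univ, true_and] at hτ ⊢
    rw [patt_mul, hτ, ← mul_assoc, mul_inv_cancel, one_mul]
  · intro τ₁ h₁ τ₂ h₂ he
    exact mul_right_cancel he
  · intro τ hτ
    set e := extPerm h (σ⁻¹ * σ'') with he
    refine ⟨τ * e⁻¹, ?_, by simp⟩
    simp only [fib, Finset.mem_filter, Finset.mem_univ, true_and] at hτ ⊢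
    have key : patt h τ = patt h (τ * e⁻¹) * (σ⁻¹ * σ'') := by
      conv_lhs => rw [show τ = τ * e⁻¹ * e by group, he]
      exact patt_mul h (τ * e⁻¹) (σ⁻¹ * σ'')
    rw [hτ] at key
    have h3 : σ = σ'' * (σ⁻¹ * σ'')⁻¹ := by
      rw [mul_inv_rev, inv_inv, ← mul_assoc, mul_inv_cancel, one_mul]
    rw [h3, eq_mul_inv_iff_mul_eq]
    exact key.symm

lemma fib_card_mul (h : l ≤ k) (σ : Equiv.Perm (Fin l)) :
    (fib h σ).card * l.factorial = k.factorial := by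
  classical
  have hsum : ∑ σ'' : Equiv.Perm (Fin l), (fib h σ'').card = k.factorial := by
    have h1 := Finset.card_eq_sum_card_fiberwise
      (s := (Finset.univ : Finset (Equiv.Perm (Fin k))))
      (t := (Finset.univ : Finset (Equiv.Perm (Fin l)))) (f := patt h)
      (fun τ _ => Finset.mem_univ _)
    rw [Finset.card_univ, Fintype.card_perm, Fintype.card_fin] at h1
    rw [h1]
    refine Finset.sum_congr rfl (fun σ'' _ => ?_)
    simp only [fib]
  calc (fib h σ).card * l.factorial
      = ∑ _σ'' : Equiv.Perm (Fin l), (fib h σ).card := by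
        rw [Finset.sum_const, Finset.card_univ, Fintype.card_perm, Fintype.card_fin, smul_eq_mul,
          mul_comm]
    _ = ∑ σ'' : Equiv.Perm (Fin l), (fib h σ'').card :=
        Finset.sum_congr rfl (fun σ'' _ => fib_card_const h σ σ'')
    _ = k.factorial := hsum

/-- `σ ∈ 𝕊_l` is a pattern in `τ ∈ 𝕊_m` if some increasing choice of indices of `τ`
has the same relative order as `σ`. -/
def IsPattern {l m : ℕ} (σ : Equiv.Perm (Fin l)) (τ : Equiv.Perm (Fin m)) : Prop :=
  ∃ b : Fin l → Fin m, StrictMono b ∧ ∀ i j : Fin l, σ i < σ j ↔ τ (b i) < τ (b j)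

lemma castLE_strictMono (h : l ≤ k) : StrictMono (Fin.castLE h) := by
  intro i j hij
  exact hij

lemma pattern_of_patt {l m k : ℕ} (hlm : l ≤ m) (hm : m ≤ k) (τ : Equiv.Perm (Fin k))
    (σ : Equiv.Perm (Fin l)) (hσ : patt (hlm.trans hm) τ = σ) :
    IsPattern σ (patt hm τ) := by
  refine ⟨Fin.castLE hlm, castLE_strictMono hlm, fun i j => ?_⟩
  rw [← hσ, patt_lt_iff, patt_lt_iff]
  exact Iff.rfl

theorem permutation_constant_le_one_pattern_free
    {S : Type*} [Fintype S] (k : ℕ) (c : S → (l : ℕ) × Equiv.Perm (Fin l))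
    (hcode : ∀ s, 1 ≤ (c s).1 ∧ (c s).1 ≤ k)
    (hinj : Function.Injective c)
    (hfree : ∀ s t : S, IsPattern (c s).2 (c t).2 → c s = c t)
    (a : ℕ → ℕ) (ha : ∀ l, a l = Nat.card {s : S // (c s).1 = l}) :
    ∑ l ∈ Finset.Icc 1 k, (a l : ℝ) / l.factorial ≤ 1 := by
  classical
  set B : S → Finset (Equiv.Perm (Fin k)) := fun s => fib (hcode s).2 (c s).2 with hB
  -- disjointness
  have hdisj : ∀ s t : S, s ≠ t → Disjoint (B s) (B t) := by
    intro s t hst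
    rw [Finset.disjoint_left]
    intro τ hτs hτt
    simp only [hB, fib, Finset.mem_filter, Finset.mem_univ, true_and] at hτs hτt
    apply hst
    apply hinj
    rcases le_total (c s).1 (c t).1 with hle | hle
    · apply hfree
      have := pattern_of_patt hle (hcode t).2 τ (c s).2 hτs
      rwa [hτt] at this
    · refine (hfree t s ?_).symm
      have := pattern_of_patt hle (hcode s).2 τ (c t).2 hτt
      rwa [hτs] at this
  -- cardinality bound in ℕ
  have hsum : ∑ s : S, (B s).card ≤ k.factorial := by
    calc ∑ s : S, (B s).card
        = (Finset.univ.biUnion B).card :=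
          (Finset.card_biUnion (fun s _ t _ hst => hdisj s t hst)).symm
      _ ≤ (Finset.univ : Finset (Equiv.Perm (Fin k))).card :=
          Finset.card_le_card (Finset.subset_univ _)
      _ = k.factorial := by rw [Finset.card_univ, Fintype.card_perm, Fintype.card_fin]
  -- cardinality of each B s
  have hcard : ∀ s : S, ((B s).card : ℝ) = (k.factorial : ℝ) / ((c s).1).factorial := by
    intro s
    have h1 := fib_card_mul (hcode s).2 (c s).2
    rw [eq_div_iff (by positivity)]
    exact_mod_cast h1
  -- real-valued bound
  have hR : ∑ s : S, (k.factorial : ℝ) / ((c s).1).factorial ≤ (k.factorial : ℝ) := by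
    calc ∑ s : S, (k.factorial : ℝ) / ((c s).1).factorial
        = ∑ s : S, ((B s).card : ℝ) := Finset.sum_congr rfl (fun s _ => (hcard s).symm)
      _ = ((∑ s : S, (B s).card : ℕ) : ℝ) := by push_cast; ring
      _ ≤ (k.factorial : ℝ) := by exact_mod_cast hsum
  -- regroup by length
  have hgroup : ∑ l ∈ Finset.Icc 1 k, (a l : ℝ) * ((k.factorial : ℝ) / l.factorial)
      = ∑ s : S, (k.factorial : ℝ) / ((c s).1).factorial := by
    rw [← Finset.sum_fiberwise_of_maps_to (g := fun s => (c s).1)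
      (fun s _ => Finset.mem_Icc.mpr ⟨(hcode s).1, (hcode s).2⟩)]
    refine Finset.sum_congr rfl (fun l hl => ?_)
    have hfilter : ∀ s ∈ Finset.univ.filter (fun s => (c s).1 = l),
        (k.factorial : ℝ) / ((c s).1).factorial = (k.factorial : ℝ) / l.factorial := by
      intro s hs
      rw [(Finset.mem_filter.1 hs).2]
    rw [Finset.sum_congr rfl hfilter, Finset.sum_const, nsmul_eq_mul]
    congr 1
    rw [ha l, Nat.card_eq_fintype_card, Fintype.card_subtype]
  -- conclude
  have hk : (0 : ℝ) < k.factorial := by positivity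
  have key : ∑ l ∈ Finset.Icc 1 k, (a l : ℝ) * ((k.factorial : ℝ) / l.factorial)
      ≤ (k.factorial : ℝ) := hgroup ▸ hR
  calc ∑ l ∈ Finset.Icc 1 k, (a l : ℝ) / l.factorial
      = (∑ l ∈ Finset.Icc 1 k, (a l : ℝ) * ((k.factorial : ℝ) / l.factorial))
        / (k.factorial : ℝ) := by
        rw [Finset.sum_div]
        refine Finset.sum_congr rfl (fun l _ => ?_)
        have hl0 : (l.factorial : ℝ) ≠ 0 := by positivity
        field_simp
    _ ≤ (k.factorial : ℝ) / (k.factorial : ℝ) := by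
        gcongr
    _ = 1 := div_self hk.ne'
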